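/- arXiv:2504.19396 — 5 statements merged into one kernel-verified Lean document; each statement's English description precedes it below -/
import Mathlib

section
/- Let 1/2 < p1 < 1, let r, q be positive coprime integers with a = r/q > 1, set k_i = floor((i+1)/a) + 1, and suppose r > k for some positive integer k. Then the absolute difference between S_r / (1 - 2 p1^q (1-p1)^r) and S_infty is less than (1/2)^{k-1}, where S_r = sum_{i=0}^{r-1} (1-p1)^i p1^{k_i} and S_infty = sum_{i=0}^{infty} (1-p1)^i p1^{k_i}. -/
theorem rational_irrational_formula_close (p1 : ℝ) (h1 : 1/2 < p1) (h1' : p1 < 1)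
    (r q k : ℕ) (hr : 0 < r) (hq : 0 < q) (hco : Nat.Coprime r q)
    (a : ℝ) (ha : a = (r : ℝ) / (q : ℝ)) (ha1 : 1 < a)
    (hk : 0 < k) (hrk : k < r)
    (ki : ℕ → ℕ) (hki : ∀ i, ki i = (⌊((i : ℝ) + 1) / a⌋ + 1).toNat) :
    |(∑ i ∈ Finset.range r, (1 - p1) ^ i * p1 ^ (ki i)) / (1 - 2 * p1 ^ q * (1 - p1) ^ r)
      - (∑' i : ℕ, (1 - p1) ^ i * p1 ^ (ki i))| < (1/2 : ℝ) ^ (k - 1) := by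
  have hp0 : (0:ℝ) < p1 := by linarith
  have hx0 : (0:ℝ) < 1 - p1 := by linarith
  have hx2 : 1 - p1 < 1/2 := by linarith
  have hx1 : 1 - p1 < 1 := by linarith
  have ha0 : 0 < a := lt_trans one_pos ha1
  have hr0 : (r:ℝ) ≠ 0 := Nat.cast_ne_zero.mpr hr.ne'
  have hq0 : (q:ℝ) ≠ 0 := Nat.cast_ne_zero.mpr hq.ne'
  set x : ℝ := 1 - p1 with hxdef
  set f : ℕ → ℝ := fun i => x ^ i * p1 ^ (ki i) with hf
  -- ki i ≥ 1
  have hki1 : ∀ i, 1 ≤ ki i := by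
    intro i
    rw [hki i]
    have h0 : 0 ≤ ⌊((i:ℝ) + 1) / a⌋ := Int.floor_nonneg.mpr (by positivity)
    omega
  -- quasi-periodicity
  have hper : ∀ i, ki (i + r) = ki i + q := by
    intro i
    have key : (((i + r : ℕ) : ℝ) + 1) / a = ((i : ℝ) + 1) / a + (q : ℝ) := by
      subst ha
      push_cast
      field_simp
      ring
    rw [hki (i + r), hki i, key]
    rw [show ((q:ℝ)) = ((q:ℤ):ℝ) by push_cast; ring, Int.floor_add_intCast]
    have h0 : 0 ≤ ⌊((i:ℝ) + 1) / a⌋ := Int.floor_nonneg.mpr (by positivity)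
    omega
  -- summability
  have hsum : Summable f := by
    apply Summable.of_nonneg_of_le (fun i => by positivity) (fun i => ?_)
      (summable_geometric_of_lt_one hx0.le hx1)
    have hp1 : p1 ^ (ki i) ≤ 1 := pow_le_one₀ hp0.le h1'.le
    calc f i = x ^ i * p1 ^ (ki i) := rfl
      _ ≤ x ^ i * 1 := by
          apply mul_le_mul_of_nonneg_left hp1 (pow_nonneg hx0.le i)
      _ = x ^ i := mul_one _
  set c : ℝ := p1 ^ q * x ^ r with hcdef
  set Sr : ℝ := ∑ i ∈ Finset.range r, x ^ i * p1 ^ (ki i) with hSrdef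
  set S : ℝ := ∑' i : ℕ, x ^ i * p1 ^ (ki i) with hSdef
  have hcpos : 0 < c := by positivity
  -- shift identity
  have hshift : ∀ i, f (i + r) = c * f i := by
    intro i
    simp only [hf, hper i, pow_add, hcdef]
    ring
  have hsplit : Sr + ∑' i, f (i + r) = S := Summable.sum_add_tsum_nat_add r hsum
  have htail : ∑' i, f (i + r) = c * S := by
    rw [hSdef]
    calc ∑' i, f (i + r) = ∑' i, c * f i := by
          congr 1; funext i; exact hshift i
      _ = c * ∑' i, f i := tsum_mul_left
      _ = c * ∑' i : ℕ, x ^ i * p1 ^ (ki i) := rfl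
  -- bound on c
  have hc' : c < (1/2:ℝ)^(k+1) := by
    have hle : c ≤ x ^ r := by
      have hp1 : p1 ^ q ≤ 1 := pow_le_one₀ hp0.le h1'.le
      calc c = p1 ^ q * x ^ r := rfl
        _ ≤ 1 * x ^ r := mul_le_mul_of_nonneg_right hp1 (pow_nonneg hx0.le r)
        _ = x ^ r := one_mul _
    have h2 : x ^ r < (1/2:ℝ) ^ r := pow_lt_pow_left₀ hx2 hx0.le hr.ne'
    have h3 : (1/2:ℝ) ^ r ≤ (1/2:ℝ) ^ (k+1) :=
      pow_le_pow_of_le_one (by norm_num) (by norm_num) (by omega)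
    linarith
  have hc14 : c < 1/4 := by
    have : (1/2:ℝ)^(k+1) ≤ (1/2:ℝ)^2 :=
      pow_le_pow_of_le_one (by norm_num) (by norm_num) (by omega)
    norm_num at this
    linarith
  have hd1 : (0:ℝ) < 1 - 2*c := by linarith
  have hd2 : (0:ℝ) < 1 - c := by linarith
  -- solve for S
  have hSeq : S = Sr / (1 - c) := by
    have : S * (1 - c) = Sr := by
      have := hsplit
      rw [htail] at this
      linarith
    field_simp at this ⊢
    linarith
  -- bound on Sr
  have hSr0 : 0 ≤ Sr := Finset.sum_nonneg fun i _ => by positivity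
  have hSr1 : Sr ≤ 1 := by
    have hterm : ∀ i ∈ Finset.range r, x ^ i * p1 ^ (ki i) ≤ x ^ i * p1 := by
      intro i _
      have : p1 ^ (ki i) ≤ p1 ^ 1 := pow_le_pow_of_le_one hp0.le h1'.le (hki1 i)
      simpa using mul_le_mul_of_nonneg_left this (pow_nonneg hx0.le i)
    have hgeo : ∑ i ∈ Finset.range r, x ^ i ≤ (1 - x)⁻¹ := by
      have := Summable.sum_le_tsum (Finset.range r) (fun i _ => pow_nonneg hx0.le i)
        (summable_geometric_of_lt_one hx0.le hx1)
      rwa [tsum_geometric_of_lt_one hx0.le hx1] at this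
    have hinv : (1 - x)⁻¹ = p1⁻¹ := by rw [hxdef]; ring_nf
    calc Sr ≤ ∑ i ∈ Finset.range r, x ^ i * p1 := Finset.sum_le_sum hterm
      _ = p1 * ∑ i ∈ Finset.range r, x ^ i := by rw [Finset.mul_sum]; congr 1; funext i; ring
      _ ≤ p1 * (1 - x)⁻¹ := mul_le_mul_of_nonneg_left hgeo hp0.le
      _ = 1 := by rw [hinv]; field_simp
  -- rewrite the goal
  have hgoal : (1:ℝ) - 2 * p1 ^ q * x ^ r = 1 - 2*c := by rw [hcdef]; ring
  rw [hgoal, hSeq]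
  have hEq : Sr / (1 - 2*c) - Sr / (1 - c) = Sr * c / ((1 - 2*c) * (1 - c)) := by
    field_simp
    ring
  have hnonneg : 0 ≤ Sr / (1 - 2*c) - Sr / (1 - c) := by
    have : Sr / (1 - c) ≤ Sr / (1 - 2*c) := by
      apply div_le_div_of_nonneg_left hSr0 hd1
      linarith
    linarith
  rw [abs_of_nonneg hnonneg, hEq]
  have hprod : (3/8 : ℝ) ≤ (1 - 2*c) * (1 - c) := by nlinarith
  have hbound : Sr * c / ((1 - 2*c) * (1 - c)) ≤ c / (3/8) := by
    apply div_le_div₀ hcpos.le _ (by norm_num) hprod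
    nlinarith
  have hpow : (1/2:ℝ) ^ (k-1) = 4 * (1/2:ℝ)^(k+1) := by
    have hk1 : k + 1 = (k - 1) + 2 := by omega
    rw [hk1, pow_add]
    ring
  have : c / (3/8) = (8/3) * c := by ring
  rw [hpow]
  have hcp : (0:ℝ) < (1/2:ℝ)^(k+1) := by positivity
  calc Sr * c / ((1 - 2*c) * (1 - c)) ≤ c / (3/8) := hbound
    _ = (8/3) * c := by ring
    _ < (8/3) * (1/2:ℝ)^(k+1) := by linarith
    _ < 4 * (1/2:ℝ)^(k+1) := by linarith
end

section
/- Fix 1/2 < p1 < 1 and define a(c) = log(p1/(1-p2-c)) / log((p2+c)/(1-p1)) for c with 1/2 < p1 <= p2 + c < 1. Then a is a strictly increasing function of c on this domain. -/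
/-- Binary entropy bound: x log x + (1-x) log (1-x) ≥ -log 2. -/
lemma cascade_aux_entropy {x : ℝ} (hx : 0 < x) (hx1 : x < 1) :
    -Real.log 2 ≤ x * Real.log x + (1 - x) * Real.log (1 - x) := by
  have h1x : (0:ℝ) < 1 - x := by linarith
  have l1 : Real.log ((2*x)⁻¹) ≤ (2*x)⁻¹ - 1 := Real.log_le_sub_one_of_pos (by positivity)
  have l2 : Real.log ((2*(1-x))⁻¹) ≤ (2*(1-x))⁻¹ - 1 :=
    Real.log_le_sub_one_of_pos (by positivity)
  rw [Real.log_inv] at l1 l2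
  have e1 : Real.log (2*x) = Real.log 2 + Real.log x :=
    Real.log_mul (by norm_num) (ne_of_gt hx)
  have e2 : Real.log (2*(1-x)) = Real.log 2 + Real.log (1-x) :=
    Real.log_mul (by norm_num) (ne_of_gt h1x)
  have a1 : 1 - (2*x)⁻¹ ≤ Real.log 2 + Real.log x := by rw [← e1]; linarith
  have a2 : 1 - (2*(1-x))⁻¹ ≤ Real.log 2 + Real.log (1-x) := by rw [← e2]; linarith
  have m1 : x * (1 - (2*x)⁻¹) ≤ x * (Real.log 2 + Real.log x) :=
    mul_le_mul_of_nonneg_left a1 hx.le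
  have m2 : (1-x) * (1 - (2*(1-x))⁻¹) ≤ (1-x) * (Real.log 2 + Real.log (1-x)) :=
    mul_le_mul_of_nonneg_left a2 h1x.le
  have i1 : x * (2*x)⁻¹ = 1/2 := by field_simp
  have i2 : (1-x) * (2*(1-x))⁻¹ = 1/2 := by field_simp
  nlinarith [m1, m2, i1, i2]

lemma cascade_aux_B {p1 x : ℝ} (h1 : 1/2 < p1) (h1' : p1 < 1) (hpx : p1 ≤ x) (hx1 : x < 1) :
    x * Real.log (1 - p1) + (1 - x) * Real.log p1 < -Real.log 2 := by
  have hp0 : 0 < p1 := by linarith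
  have hq0 : 0 < 1 - p1 := by linarith
  have hsum : Real.log (1 - p1) + Real.log p1 < -(2 * Real.log 2) := by
    have h4 : (1 - p1) * p1 < 1/4 := by nlinarith
    have := Real.log_lt_log (by positivity) h4
    rw [Real.log_mul (ne_of_gt hq0) (ne_of_gt hp0)] at this
    have h14 : Real.log (1/4 : ℝ) = -(2 * Real.log 2) := by
      rw [show (1/4:ℝ) = ((2:ℝ)^2)⁻¹ by norm_num, Real.log_inv, Real.log_pow]
      push_cast; ring
    linarith [this, h14.le, h14.ge]
  have hlt : Real.log (1 - p1) < Real.log p1 := Real.log_lt_log hq0 (by linarith)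
  have hprod : (x - 1/2) * (Real.log (1 - p1) - Real.log p1) ≤ 0 :=
    mul_nonpos_of_nonneg_of_nonpos (by linarith) (by linarith)
  nlinarith [hprod, hsum]

lemma cascade_aux_key {p1 x : ℝ} (h1 : 1/2 < p1) (h1' : p1 < 1) (hpx : p1 ≤ x) (hx1 : x < 1) :
    (1 - x) * (Real.log p1 - Real.log (1 - x)) < x * (Real.log x - Real.log (1 - p1)) := by
  have hA := cascade_aux_entropy (x := x) (by linarith) hx1
  have hB := cascade_aux_B h1 h1' hpx hx1
  nlinarith [hA, hB]

theorem cascade_constant_incr_in_p2 (p1 p2 : ℝ) (h1 : 1/2 < p1) (h1' : p1 < 1) :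
    StrictMonoOn (fun c : ℝ => Real.log (p1 / (1 - p2 - c)) / Real.log ((p2 + c) / (1 - p1)))
      {c : ℝ | p1 ≤ p2 + c ∧ p2 + c < 1} := by
  have hp0 : (0:ℝ) < p1 := by linarith
  have hq0 : (0:ℝ) < 1 - p1 := by linarith
  set g : ℝ → ℝ := fun c =>
    (Real.log p1 - Real.log (1 - p2 - c)) / (Real.log (p2 + c) - Real.log (1 - p1)) with hgdef
  have hs : {c : ℝ | p1 ≤ p2 + c ∧ p2 + c < 1} = Set.Ico (p1 - p2) (1 - p2) := by
    ext c
    simp only [Set.mem_setOf_eq, Set.mem_Ico]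
    constructor <;> rintro ⟨a, b⟩ <;> constructor <;> linarith
  -- positivity facts on the set
  have hg : StrictMonoOn g (Set.Ico (p1 - p2) (1 - p2)) := by
    apply strictMonoOn_of_deriv_pos (convex_Ico _ _)
    · apply ContinuousOn.div
      · apply ContinuousOn.sub continuousOn_const
        apply ContinuousOn.log (by fun_prop)
        intro c hc
        simp only [Set.mem_Ico] at hc
        have : 0 < 1 - p2 - c := by linarith [hc.2]
        exact ne_of_gt this
      · apply ContinuousOn.sub _ continuousOn_const
        apply ContinuousOn.log (by fun_prop)
        intro c hc
        simp only [Set.mem_Ico] at hc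
        have : 0 < p2 + c := by linarith [hc.1]
        exact ne_of_gt this
      · intro c hc
        simp only [Set.mem_Ico] at hc
        have hD : 0 < Real.log (p2 + c) - Real.log (1 - p1) := by
          have : Real.log (1 - p1) < Real.log (p2 + c) :=
            Real.log_lt_log hq0 (by linarith [hc.1])
          linarith
        exact ne_of_gt hD
    · intro c hc
      rw [interior_Ico] at hc
      simp only [Set.mem_Ioo] at hc
      have hx0 : 0 < p2 + c := by linarith [hc.1]
      have hx1 : p2 + c < 1 := by linarith [hc.2]
      have h1x : 0 < 1 - p2 - c := by linarith
      have hD : 0 < Real.log (p2 + c) - Real.log (1 - p1) := by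
        have : Real.log (1 - p1) < Real.log (p2 + c) :=
          Real.log_lt_log hq0 (by linarith [hc.1])
        linarith
      have hN : 0 < Real.log p1 - Real.log (1 - p2 - c) := by
        have : Real.log (1 - p2 - c) < Real.log p1 :=
          Real.log_lt_log h1x (by linarith [hc.1])
        linarith
      -- derivatives
      have hinner1 : HasDerivAt (fun c : ℝ => 1 - p2 - c) (-1) c := by
        simpa using (hasDerivAt_id' c).const_sub (1 - p2)
      have hlog1 : HasDerivAt (fun c : ℝ => Real.log (1 - p2 - c))
          ((1 - p2 - c)⁻¹ * (-1)) c := by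
        exact (Real.hasDerivAt_log (ne_of_gt h1x)).comp c hinner1
      have hNum : HasDerivAt (fun c : ℝ => Real.log p1 - Real.log (1 - p2 - c))
          ((1 - p2 - c)⁻¹) c := by
        have := (hasDerivAt_const c (Real.log p1)).sub hlog1
        exact this.congr_deriv (by ring)
      have hinner2 : HasDerivAt (fun c : ℝ => p2 + c) 1 c := by
        simpa using (hasDerivAt_id' c).const_add p2
      have hDen : HasDerivAt (fun c : ℝ => Real.log (p2 + c) - Real.log (1 - p1))
          ((p2 + c)⁻¹) c := by
        have hl := (Real.hasDerivAt_log (ne_of_gt hx0)).comp c hinner2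
        have := hl.sub (hasDerivAt_const c (Real.log (1 - p1)))
        exact this.congr_deriv (by ring)
      have hdiv := hNum.div hDen (ne_of_gt hD)
      rw [show deriv g c = _ from hdiv.deriv]
      apply div_pos _ (pow_pos hD 2)
      -- numerator positivity
      have hkey := cascade_aux_key (p1 := p1) (x := p2 + c) h1 h1' (by linarith [hc.1])
        (by linarith [hc.2])
      have hxx : 1 - (p2 + c) = 1 - p2 - c := by ring
      rw [hxx] at hkey
      have hfrac : (Real.log p1 - Real.log (1 - p2 - c)) / (p2 + c)
          < (Real.log (p2 + c) - Real.log (1 - p1)) / (1 - p2 - c) := by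
        rw [div_lt_div_iff₀ hx0 h1x]
        nlinarith [hkey]
      rw [div_eq_mul_inv, div_eq_mul_inv] at hfrac
      linarith [hfrac]
  -- transfer to the original function
  intro a ha b hb hab
  have heq : ∀ c ∈ {c : ℝ | p1 ≤ p2 + c ∧ p2 + c < 1},
      Real.log (p1 / (1 - p2 - c)) / Real.log ((p2 + c) / (1 - p1)) = g c := by
    intro c hc
    obtain ⟨hc1, hc2⟩ := hc
    have h1x : 0 < 1 - p2 - c := by linarith
    have hx0 : 0 < p2 + c := by linarith
    rw [hgdef]
    simp only
    rw [Real.log_div (ne_of_gt hp0) (ne_of_gt h1x),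
      Real.log_div (ne_of_gt hx0) (ne_of_gt hq0)]
  simp only
  rw [heq a ha, heq b hb]
  rw [hs] at ha hb
  exact hg ha hb hab
end

section
/- Fix 1/2 < p2 < 1 and define a(c) = log((p1+c)/(1-p2)) / log(p2/(1-p1-c)) for c with 1/2 < p1 + c < p2 < 1. Then a is a strictly decreasing function of c on this domain. -/
theorem cascade_constant_decr_in_p1 (p1 p2 : ℝ) (h2 : 1/2 < p2) (h2' : p2 < 1) :
    StrictAntiOn (fun c : ℝ => Real.log ((p1 + c) / (1 - p2)) / Real.log (p2 / (1 - p1 - c)))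
      {c : ℝ | 1/2 < p1 + c ∧ p1 + c < p2} := by
  intro a ha b hb hab
  obtain ⟨ha1, ha2⟩ := ha
  obtain ⟨hb1, hb2⟩ := hb
  set A := p1 + a with hA
  set B := p1 + b with hB
  have hAB : A < B := by simp [hA, hB]; linarith
  have hApos : (0:ℝ) < A := by linarith
  have hBpos : (0:ℝ) < B := by linarith
  have hp2pos : (0:ℝ) < p2 := by linarith
  have h1p2 : (0:ℝ) < 1 - p2 := by linarith
  have h1A : (0:ℝ) < 1 - A := by linarith
  have h1B : (0:ℝ) < 1 - B := by linarith
  have e1 : 1 - p1 - a = 1 - A := by ring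
  have e2 : 1 - p1 - b = 1 - B := by ring
  simp only [e1, e2]
  rw [Real.log_div (ne_of_gt hApos) (ne_of_gt h1p2),
      Real.log_div (ne_of_gt hBpos) (ne_of_gt h1p2),
      Real.log_div (ne_of_gt hp2pos) (ne_of_gt h1A),
      Real.log_div (ne_of_gt hp2pos) (ne_of_gt h1B)]
  have hDA : Real.log (1 - A) < Real.log p2 := Real.log_lt_log h1A (by linarith)
  have hDB : Real.log (1 - B) < Real.log p2 := Real.log_lt_log h1B (by linarith)
  have hDAB : Real.log (1 - B) < Real.log (1 - A) := Real.log_lt_log h1B (by linarith)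
  -- G(B) > 0 : B(1-B) > p2(1-p2)
  have hGB : Real.log p2 + Real.log (1 - p2) < Real.log B + Real.log (1 - B) := by
    have h : p2 * (1 - p2) < B * (1 - B) := by nlinarith
    have := Real.log_lt_log (by positivity) h
    rwa [Real.log_mul (ne_of_gt hp2pos) (ne_of_gt h1p2),
         Real.log_mul (ne_of_gt hBpos) (ne_of_gt h1B)] at this
  -- G(B) < G(A) : B(1-B) < A(1-A)
  have hGAB : Real.log B + Real.log (1 - B) < Real.log A + Real.log (1 - A) := by
    have h : B * (1 - B) < A * (1 - A) := by nlinarith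
    have := Real.log_lt_log (by positivity) h
    rwa [Real.log_mul (ne_of_gt hBpos) (ne_of_gt h1B),
         Real.log_mul (ne_of_gt hApos) (ne_of_gt h1A)] at this
  rw [div_lt_div_iff₀ (by linarith) (by linarith)]
  nlinarith [mul_pos (sub_pos.mpr hGB) (sub_pos.mpr hDA),
             mul_pos (sub_pos.mpr hGB) (sub_pos.mpr hDAB),
             mul_pos (sub_pos.mpr hDA) (sub_pos.mpr hGAB),
             mul_pos (sub_pos.mpr hDAB) (sub_pos.mpr hGAB)]
end

section
/- Let epsilon > 0 and let a = r/q > 1 be rational in lowest terms with r > log2(1/epsilon) + 1, and let 1/2 < p1 < 1 with k_i = floor((i+1)/a)+1. Then | S_r/(1 - 2 p1^q (1-p1)^r) - sum_{i=0}^{infty} (1-p1)^i p1^{k_i} | < epsilon, where S_r = sum_{i=0}^{r-1} (1-p1)^i p1^{k_i}. Consequently, at most (log2(1/epsilon)+1)^2 rationals a in lowest terms (with numerator and denominator bounded accordingly) violate this bound. -/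
/-- `k_i` for cascade constant `a`. -/
noncomputable def kFun (a : ℝ) (i : ℕ) : ℕ := (⌊((i : ℝ) + 1) / a⌋ + 1).toNat

/-- Y-cascade probability formula for a rational cascade constant `a = r/q`. -/
noncomputable def Pra (p1 : ℝ) (r q : ℕ) : ℝ :=
  (∑ i ∈ Finset.range r, (1 - p1) ^ i * p1 ^ (kFun ((r : ℝ) / (q : ℝ)) i)) /
    (1 - 2 * p1 ^ q * (1 - p1) ^ r)

/-- Y-cascade probability formula for an irrational cascade constant `a`. -/
noncomputable def Pirra (p1 a : ℝ) : ℝ := ∑' i : ℕ, (1 - p1) ^ i * p1 ^ (kFun a i)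

lemma kFun_period (r q : ℕ) (hq : 0 < q) (hr : 0 < r) (i : ℕ) :
    kFun ((r : ℝ) / q) (i + r) = kFun ((r : ℝ) / q) i + q := by
  have hq0 : (0:ℝ) < q := by exact_mod_cast hq
  have hr0 : (0:ℝ) < r := by exact_mod_cast hr
  have key : ((i + r : ℕ) : ℝ) + 1 = (((i:ℝ)+1)/((r:ℝ)/q) + q) * ((r:ℝ)/q) := by
    push_cast
    field_simp
    ring
  unfold kFun
  rw [key, mul_div_cancel_right₀ _ (by positivity : (r:ℝ)/q ≠ 0), Int.floor_add_natCast]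
  have h0 : 0 ≤ ⌊((i:ℝ)+1)/((r:ℝ)/q)⌋ := Int.floor_nonneg.2 (by positivity)
  omega

lemma kFun_pos (a : ℝ) (ha : 0 < a) (i : ℕ) : 1 ≤ kFun a i := by
  unfold kFun
  have h0 : 0 ≤ ⌊((i:ℝ)+1)/a⌋ := Int.floor_nonneg.2 (by positivity)
  omega

lemma summable_aux (p1 : ℝ) (h1 : 1/2 < p1) (h1' : p1 < 1) (a : ℝ) :
    Summable (fun i : ℕ => (1 - p1)^i * p1 ^ kFun a i) := by
  have ht0 : (0:ℝ) ≤ 1 - p1 := by linarith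
  have ht1 : 1 - p1 < 1 := by linarith
  refine Summable.of_nonneg_of_le (fun i => by positivity) (fun i => ?_)
    (summable_geometric_of_lt_one ht0 ht1)
  calc (1-p1)^i * p1 ^ kFun a i ≤ (1-p1)^i * 1 :=
        mul_le_mul_of_nonneg_left (pow_le_one₀ (by linarith) h1'.le) (by positivity)
    _ = (1-p1)^i := mul_one _

lemma pirra_eq (p1 : ℝ) (h1 : 1/2 < p1) (h1' : p1 < 1) (r q : ℕ) (hq : 0 < q) (hr : 0 < r) :
    Pirra p1 ((r:ℝ)/q) =
      (∑ i ∈ Finset.range r, (1 - p1) ^ i * p1 ^ (kFun ((r : ℝ) / (q : ℝ)) i)) /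
        (1 - p1^q * (1-p1)^r) := by
  have hsum := summable_aux p1 h1 h1' ((r:ℝ)/q)
  have hshift : ∀ i, (1 - p1)^(i+r) * p1 ^ kFun ((r:ℝ)/q) (i+r)
      = (p1^q * (1-p1)^r) * ((1 - p1)^i * p1 ^ kFun ((r:ℝ)/q) i) := by
    intro i
    rw [kFun_period r q hq hr i, pow_add, pow_add]
    ring
  have key := hsum.sum_add_tsum_nat_add r
  rw [show (∑' i, (1 - p1)^(i+r) * p1 ^ kFun ((r:ℝ)/q) (i+r))
      = (p1^q * (1-p1)^r) * ∑' i, (1 - p1)^i * p1 ^ kFun ((r:ℝ)/q) i by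
    rw [← tsum_mul_left]; exact tsum_congr hshift] at key
  have hx1 : p1^q * (1-p1)^r < 1 := by
    calc p1^q * (1-p1)^r ≤ p1^q * 1 :=
          mul_le_mul_of_nonneg_left (pow_le_one₀ (by linarith) (by linarith)) (by positivity)
      _ = p1^q := mul_one _
      _ < 1 := pow_lt_one₀ (by linarith) h1' hq.ne'
  rw [Pirra, eq_div_iff (by linarith : 1 - p1^q * (1-p1)^r ≠ 0)]
  linarith [key]

lemma xbound (p1 : ℝ) (h1 : 1/2 < p1) (h1' : p1 < 1) (q r : ℕ) (hq : 1 ≤ q) (hr : 2 ≤ r) :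
    p1^q * (1-p1)^r ≤ (1/2:ℝ)^(r+1) := by
  obtain ⟨r', rfl⟩ : ∃ r', r = r' + 2 := ⟨r - 2, by omega⟩
  have ht0 : (0:ℝ) ≤ 1 - p1 := by linarith
  have ht : 1 - p1 ≤ 1/2 := by linarith
  have h4 : p1 * (1 - p1) ≤ 1/4 := by nlinarith [sq_nonneg (p1 - 1/2)]
  have hpq : p1^q ≤ p1 := by
    calc p1^q ≤ p1^1 := pow_le_pow_of_le_one (by linarith) h1'.le hq
      _ = p1 := pow_one _
  calc p1^q * (1-p1)^(r'+2) ≤ p1 * (1-p1)^(r'+2) :=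
        mul_le_mul_of_nonneg_right hpq (pow_nonneg ht0 _)
    _ = (p1 * (1-p1)) * ((1-p1) * (1-p1)^r') := by ring
    _ ≤ (1/4) * ((1/2) * (1/2)^r') := by
        apply mul_le_mul h4
          (mul_le_mul ht (pow_le_pow_left₀ ht0 ht r') (pow_nonneg ht0 _) (by norm_num))
          (mul_nonneg ht0 (pow_nonneg ht0 _)) (by norm_num)
    _ = (1/2)^(r'+2+1) := by ring

lemma Sbound (p1 : ℝ) (h1 : 1/2 < p1) (h1' : p1 < 1) (r q : ℕ) (hq : 0 < q) (hr : 0 < r) :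
    ∑ i ∈ Finset.range r, (1 - p1)^i * p1 ^ kFun ((r:ℝ)/q) i ≤ 1 := by
  have ht0 : (0:ℝ) ≤ 1 - p1 := by linarith
  have hp0 : (0:ℝ) < p1 := by linarith
  have hq0 : (0:ℝ) < q := by exact_mod_cast hq
  have hr0 : (0:ℝ) < r := by exact_mod_cast hr
  have step : ∀ i ∈ Finset.range r, (1 - p1)^i * p1 ^ kFun ((r:ℝ)/q) i ≤ (1-p1)^i * p1 := by
    intro i _
    refine mul_le_mul_of_nonneg_left ?_ (pow_nonneg ht0 i)
    calc p1 ^ kFun ((r:ℝ)/q) i ≤ p1^1 :=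
          pow_le_pow_of_le_one hp0.le h1'.le (kFun_pos _ (by positivity) i)
      _ = p1 := pow_one _
  have hgeom := geom_sum_mul (1-p1) r
  calc ∑ i ∈ Finset.range r, (1 - p1)^i * p1 ^ kFun ((r:ℝ)/q) i
      ≤ ∑ i ∈ Finset.range r, (1-p1)^i * p1 := Finset.sum_le_sum step
    _ = (∑ i ∈ Finset.range r, (1-p1)^i) * p1 := by rw [← Finset.sum_mul]
    _ ≤ 1 := by nlinarith [pow_nonneg ht0 r]

lemma part1 (ε : ℝ) (hε : 0 < ε) (p1 : ℝ) (h1 : 1/2 < p1) (h1' : p1 < 1)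
    (r q : ℕ) (hq : 0 < q) (hqr : q < r) (hlog : Real.logb 2 (1 / ε) + 1 < (r : ℝ)) :
    |Pra p1 r q - Pirra p1 ((r : ℝ) / (q : ℝ))| < ε := by
  have hr : 2 ≤ r := by omega
  have ht0 : (0:ℝ) < 1 - p1 := by linarith
  have hp0 : (0:ℝ) < p1 := by linarith
  set S := ∑ i ∈ Finset.range r, (1 - p1)^i * p1 ^ kFun ((r:ℝ)/q) i with hS
  set x := p1^q * (1-p1)^r with hx
  have hx0 : 0 < x := mul_pos (pow_pos hp0 q) (pow_pos ht0 r)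
  have hxb : x ≤ (1/2:ℝ)^(r+1) := xbound p1 h1 h1' q r hq hr
  have hx8 : x ≤ 1/8 := by
    refine hxb.trans ?_
    calc (1/2:ℝ)^(r+1) ≤ (1/2:ℝ)^3 := pow_le_pow_of_le_one (by norm_num) (by norm_num) (by omega)
      _ = 1/8 := by norm_num
  have hS0 : 0 ≤ S := Finset.sum_nonneg fun i _ =>
    mul_nonneg (pow_nonneg ht0.le i) (pow_nonneg hp0.le _)
  have hS1 : S ≤ 1 := Sbound p1 h1 h1' r q hq (by omega)
  have hPirra : Pirra p1 ((r:ℝ)/q) = S / (1 - x) := pirra_eq p1 h1 h1' r q hq (by omega)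
  have hPra : Pra p1 r q = S / (1 - 2*x) := by rw [Pra, ← hS, hx]; ring_nf
  have hdiff : Pra p1 r q - Pirra p1 ((r:ℝ)/q) = S * x / ((1-2*x)*(1-x)) := by
    rw [hPra, hPirra]
    have d1 : (1:ℝ) - 2*x ≠ 0 := by linarith
    have d2 : (1:ℝ) - x ≠ 0 := by linarith
    field_simp
    ring
  have habs : 0 ≤ S * x / ((1-2*x)*(1-x)) :=
    div_nonneg (mul_nonneg hS0 hx0.le) (by nlinarith)
  rw [hdiff, abs_of_nonneg habs]
  have hle : S * x / ((1-2*x)*(1-x)) ≤ 2 * x := by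
    rw [div_le_iff₀ (by nlinarith)]
    nlinarith [mul_nonneg (sub_nonneg.2 hS1) hx0.le, mul_le_mul_of_nonneg_left hx8 hx0.le,
      mul_nonneg (mul_nonneg hx0.le hx0.le) hx0.le]
  have heps : (1/2:ℝ)^(r-1) < ε := by
    have hlog2 : Real.logb 2 (1/ε) < (r:ℝ) - 1 := by linarith
    have h2 : 1/ε < (2:ℝ) ^ ((r:ℝ)-1) := (Real.logb_lt_iff_lt_rpow (by norm_num) (by positivity)).1 hlog2
    have hc : ((r - 1 : ℕ) : ℝ) = (r:ℝ) - 1 := by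
      rw [Nat.cast_sub (by omega : 1 ≤ r)]; norm_num
    rw [← hc, Real.rpow_natCast] at h2
    rw [one_div_pow, div_lt_iff₀ (by positivity)]
    rw [div_lt_iff₀ hε] at h2
    nlinarith [pow_pos (by norm_num : (0:ℝ) < 2) (r-1)]
  have hfin : 2 * x ≤ (1/2:ℝ)^r := by
    calc 2*x ≤ 2*(1/2)^(r+1) := by linarith
      _ = (1/2)^r := by rw [pow_succ]; ring
  have hlt : (1/2:ℝ)^r ≤ (1/2:ℝ)^(r-1) :=
    pow_le_pow_of_le_one (by norm_num) (by norm_num) (by omega)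
  linarith

lemma rat_facts (x : ℚ) (h : 1 < x) :
    0 < x.den ∧ x.den < x.num.toNat ∧ (x:ℝ) = (x.num.toNat : ℝ) / (x.den : ℝ) := by
  have h2 : ((x.den:ℚ)) < ((x.num:ℚ)) := by
    rw [← Rat.num_div_den x] at h
    have hd : (0:ℚ) < (x.den:ℚ) := by exact_mod_cast x.pos
    rw [lt_div_iff₀ hd, one_mul] at h
    exact h
  have hlt : (x.den:ℤ) < x.num := by exact_mod_cast h2
  have hpos := x.pos
  refine ⟨hpos, by omega, ?_⟩
  rw [Rat.cast_def]
  congr 1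
  exact_mod_cast (Int.toNat_of_nonneg (by omega : 0 ≤ x.num)).symm

theorem rational_formula_close_and_finitely_many_exceptions
    (ε : ℝ) (hε : 0 < ε) (p1 : ℝ) (h1 : 1/2 < p1) (h1' : p1 < 1) :
    (∀ r q : ℕ, 0 < q → q < r → Nat.Coprime r q →
        Real.logb 2 (1 / ε) + 1 < (r : ℝ) →
        |Pra p1 r q - Pirra p1 ((r : ℝ) / (q : ℝ))| < ε) ∧
      {x : ℚ | 1 < x ∧ ε ≤ |Pra p1 x.num.toNat x.den - Pirra p1 (x : ℝ)|}.Finite ∧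
      ({x : ℚ | 1 < x ∧ ε ≤ |Pra p1 x.num.toNat x.den - Pirra p1 (x : ℝ)|}.ncard : ℝ)
        ≤ (Real.logb 2 (1 / ε) + 1) ^ 2 := by
  set L : ℝ := Real.logb 2 (1 / ε) + 1 with hLdef
  set Sset : Set ℚ := {x : ℚ | 1 < x ∧ ε ≤ |Pra p1 x.num.toNat x.den - Pirra p1 (x : ℝ)|}
    with hSdef
  set N : ℕ := ⌊L⌋.toNat with hNdef
  have key : ∀ x ∈ Sset, x.den < x.num.toNat ∧ (x.num.toNat : ℝ) ≤ L := by
    rintro x ⟨hx, hband⟩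
    obtain ⟨hq, hqr, hcast⟩ := rat_facts x hx
    refine ⟨hqr, ?_⟩
    by_contra hcon
    push_neg at hcon
    have hp := part1 ε hε p1 h1 h1' x.num.toNat x.den hq hqr hcon
    rw [← hcast] at hp
    linarith
  have hmem : ∀ x ∈ Sset,
      (fun y : ℚ => (y.num.toNat, y.den)) x ∈ (Finset.Icc 1 N ×ˢ Finset.Icc 1 N : Finset (ℕ × ℕ)) := by
    intro x hx
    obtain ⟨hqr, hrL⟩ := key x hx
    have hq := x.pos
    have hrN : x.num.toNat ≤ N := by
      have h1' : (x.num.toNat : ℤ) ≤ ⌊L⌋ := Int.le_floor.2 (by exact_mod_cast hrL)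
      omega
    simp only [Finset.mem_product, Finset.mem_Icc]
    omega
  have hinj : Set.InjOn (fun y : ℚ => (y.num.toNat, y.den)) Sset := by
    rintro a ⟨ha, _⟩ b ⟨hb, _⟩ h
    simp only [Prod.mk.injEq] at h
    obtain ⟨hn, hd⟩ := h
    obtain ⟨_, ha2, _⟩ := rat_facts a ha
    obtain ⟨_, hb2, _⟩ := rat_facts b hb
    refine Rat.ext ?_ hd
    omega
  have himg : (fun y : ℚ => (y.num.toNat, y.den)) '' Sset
      ⊆ ↑(Finset.Icc 1 N ×ˢ Finset.Icc 1 N : Finset (ℕ × ℕ)) := by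
    rintro p ⟨x, hx, rfl⟩
    exact hmem x hx
  have hfin : Sset.Finite :=
    Set.Finite.of_finite_image ((Finset.finite_toSet _).subset himg) hinj
  refine ⟨fun r q a b _ d => part1 ε hε p1 h1 h1' r q a b d, hfin, ?_⟩
  have hcard : Sset.ncard ≤ N * N := by
    have e1 : Sset.ncard = ((fun y : ℚ => (y.num.toNat, y.den)) '' Sset).ncard :=
      (Set.ncard_image_of_injOn hinj).symm
    have e2 : ((fun y : ℚ => (y.num.toNat, y.den)) '' Sset).ncard
        ≤ (Finset.Icc 1 N ×ˢ Finset.Icc 1 N : Finset (ℕ × ℕ)).card := by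
      rw [← Set.ncard_coe_finset]
      exact Set.ncard_le_ncard himg (Finset.finite_toSet _)
    rw [Finset.card_product, Nat.card_Icc] at e2
    simp only [Nat.add_sub_cancel] at e2
    rw [e1]
    exact e2
  rcases Nat.eq_zero_or_pos N with h0 | hpos
  · have hz : Sset.ncard = 0 := by
      rw [h0] at hcard
      simpa using hcard
    rw [hz]
    push_cast
    positivity
  · have hNL : (N:ℝ) ≤ L := by
      have hfl : (0:ℤ) < ⌊L⌋ := by omega
      have h2 : ((⌊L⌋ : ℤ) : ℝ) ≤ L := Int.floor_le L
      have h3 : ((N:ℕ):ℝ) = ((⌊L⌋ : ℤ) : ℝ) := by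
        rw [hNdef]
        exact_mod_cast Int.toNat_of_nonneg hfl.le
      linarith
    have hN0 : (0:ℝ) ≤ (N:ℝ) := by positivity
    calc (Sset.ncard : ℝ) ≤ ((N * N : ℕ) : ℝ) := by exact_mod_cast hcard
      _ = (N:ℝ) * (N:ℝ) := by push_cast; ring
      _ ≤ L * L := mul_le_mul hNL hNL hN0 (hN0.trans hNL)
      _ = L ^ 2 := (sq L).symm
end

section
/- Let a > 1 be irrational, 1/2 < p1 < p2 < 1, k_i = floor((i+1)/a)+1, and let h_i(c) = (1-p1)^i p1^{k_i(c)} - (1-p2-c)^{k_i(c)} (p2+c)^i where k_i(c) uses the cascade constant a(c) = log(p1/(1-p2-c))/log((p2+c)/(1-p1)). On any closed subinterval of (p1 - p2, 1 - p2), the series sum_{i=0}^{infty} h_i(c) converges uniformly in c. -/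
theorem uniform_convergence_of_diff_series (p1 p2 : ℝ)
    (h1 : 1/2 < p1) (h12 : p1 < p2) (h2 : p2 < 1)
    (ha : 1 < Real.log (p1 / (1 - p2)) / Real.log (p2 / (1 - p1)))
    (hirr : Irrational (Real.log (p1 / (1 - p2)) / Real.log (p2 / (1 - p1))))
    (aFun : ℝ → ℝ)
    (haFun : ∀ c, aFun c = Real.log (p1 / (1 - p2 - c)) / Real.log ((p2 + c) / (1 - p1)))
    (kFun : ℝ → ℕ → ℕ)
    (hkFun : ∀ c i, kFun c i = (⌊((i : ℝ) + 1) / aFun c⌋ + 1).toNat)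
    (h : ℕ → ℝ → ℝ)
    (hdef : ∀ i c, h i c = (1 - p1) ^ i * p1 ^ (kFun c i)
        - (1 - p2 - c) ^ (kFun c i) * (p2 + c) ^ i)
    (s t : ℝ) (hs : p1 - p2 < s) (hst : s ≤ t) (ht : t < 1 - p2) :
    TendstoUniformlyOn (fun N c => ∑ i ∈ Finset.range N, h i c)
      (fun c => ∑' i : ℕ, h i c) Filter.atTop (Set.Icc s t) := by
  have hq1 : (0:ℝ) ≤ 1 - p1 := by linarith
  have hq1lt : 1 - p1 < 1 := by linarith
  have hq2 : (0:ℝ) ≤ p2 + t := by linarith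
  have hq2lt : p2 + t < 1 := by linarith
  have hsum : Summable (fun i : ℕ => (1 - p1) ^ i + (p2 + t) ^ i) :=
    (summable_geometric_of_lt_one hq1 hq1lt).add
      (summable_geometric_of_lt_one hq2 hq2lt)
  apply tendstoUniformlyOn_tsum_nat hsum
  intro i c hc
  obtain ⟨hcs, hct⟩ := hc
  have hp1pos : (0:ℝ) ≤ p1 := by linarith
  have hp1le : p1 ≤ 1 := by linarith
  have hApos : (0:ℝ) ≤ 1 - p2 - c := by linarith
  have hAle : 1 - p2 - c ≤ 1 := by linarith
  have hBpos : (0:ℝ) ≤ p2 + c := by linarith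
  have hBle : p2 + c ≤ p2 + t := by linarith
  have ht1 : (1 - p1) ^ i * p1 ^ (kFun c i) ≤ (1 - p1) ^ i := by
    calc (1 - p1) ^ i * p1 ^ (kFun c i) ≤ (1 - p1) ^ i * 1 := by
          exact mul_le_mul_of_nonneg_left (pow_le_one₀ hp1pos hp1le) (pow_nonneg hq1 i)
      _ = (1 - p1) ^ i := mul_one _
  have ht2 : (1 - p2 - c) ^ (kFun c i) * (p2 + c) ^ i ≤ (p2 + t) ^ i := by
    calc (1 - p2 - c) ^ (kFun c i) * (p2 + c) ^ i ≤ 1 * (p2 + c) ^ i := by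
          exact mul_le_mul_of_nonneg_right (pow_le_one₀ hApos hAle) (pow_nonneg hBpos i)
      _ = (p2 + c) ^ i := one_mul _
      _ ≤ (p2 + t) ^ i := pow_le_pow_left₀ hBpos hBle i
  have hnn1 : 0 ≤ (1 - p1) ^ i * p1 ^ (kFun c i) :=
    mul_nonneg (pow_nonneg hq1 i) (pow_nonneg hp1pos _)
  have hnn2 : 0 ≤ (1 - p2 - c) ^ (kFun c i) * (p2 + c) ^ i :=
    mul_nonneg (pow_nonneg hApos _) (pow_nonneg hBpos i)
  rw [hdef, Real.norm_eq_abs, abs_sub_le_iff]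
  constructor <;> nlinarith
end
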